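/- Let G be a finite simple graph whose edge set can be partitioned into α sets, each of which forms a forest (an acyclic subgraph). Then there exists an orientation of the edges of G in which every vertex has out-degree at most α. -/

import Mathlib

/-- `o` is an orientation of the graph `G`: it assigns to each edge of `G` one of its two
endpoints as head. -/
def IsOrientation {V : Type*} (G : SimpleGraph V) (o : Sym2 V → V) : Prop :=
  ∀ e ∈ G.edgeSet, o e ∈ e

/-- The out-degree of a vertex `v` under an orientation `o` of `G`: the number of edges of `G`
incident to `v` whose head is not `v`. -/
def outDegree {V : Type*} [Fintype V] [DecidableEq V] (G : SimpleGraph V) [DecidableRel G.Adj]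
    (o : Sym2 V → V) (v : V) : ℕ :=
  (G.edgeFinset.filter (fun e => v ∈ e ∧ o e ≠ v)).card

/-- The subgraph of `G` consisting of the edges with label `i` under the edge-labeling `c`. -/
def labelGraph {V : Type*} {k : ℕ} (G : SimpleGraph V) (c : Sym2 V → Fin k) (i : Fin k) :
    SimpleGraph V where
  Adj u v := G.Adj u v ∧ c s(u, v) = i
  symm := by
    constructor
    intro u v ⟨h1, h2⟩
    exact ⟨h1.symm, by rwa [Sym2.eq_swap]⟩
  loopless := ⟨fun v ⟨h, _⟩ => G.irrefl h⟩

open SimpleGraph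

lemma exists_leaf {V : Type*} [Fintype V] {F : SimpleGraph V} (hF : F.IsAcyclic)
    {a b : V} (hab : F.Adj a b) :
    ∃ w u : V, F.Adj w u ∧ ∀ x, F.Adj w x → x = u := by
  classical
  set P : ℕ → Prop := fun m => ∃ (y : V) (p : F.Walk a y), p.IsPath ∧ p.length = m with hP
  set n := Nat.findGreatest P (Fintype.card V) with hn
  have hP1 : P 1 := ⟨b, Walk.cons hab Walk.nil, by simp [hab.ne], by simp⟩
  have hcard1 : 1 ≤ Fintype.card V := Fintype.card_pos_iff.mpr ⟨a⟩
  have hPn : P n := Nat.findGreatest_spec hcard1 hP1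
  obtain ⟨w, p, hp, hlen⟩ := hPn
  have hn1 : 1 ≤ n := Nat.le_findGreatest hcard1 hP1
  have hpnil : ¬ p.Nil := by rw [Walk.not_nil_iff_lt_length]; omega
  have hrnil : ¬ p.reverse.Nil := by
    rw [Walk.not_nil_iff_lt_length, Walk.length_reverse]; omega
  obtain ⟨u, hwu, q, hq⟩ := Walk.not_nil_iff.mp hrnil
  refine ⟨w, u, hwu, fun x hx => ?_⟩
  by_contra hxu
  by_cases hxs : x ∈ p.support
  · -- build a second path from a to w through x
    have htp : (p.takeUntil x hxs).IsPath := hp.takeUntil hxs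
    have hwns : w ∉ (p.takeUntil x hxs).support := by
      intro hw
      have hspec := p.take_spec hxs
      have hnd : p.support.Nodup := hp.support_nodup
      rw [← hspec, Walk.support_append] at hnd
      have hdisj := List.disjoint_of_nodup_append hnd
      apply hdisj hw
      have hwd : w ∈ (p.dropUntil x hxs).support := Walk.end_mem_support _
      rw [Walk.support_eq_cons] at hwd
      rcases List.mem_cons.mp hwd with h | h
      · exact (hx.ne h).elim
      · exact h
    have hq' : ((p.takeUntil x hxs).concat hx.symm).IsPath := by
      rw [Walk.isPath_def, Walk.support_concat]
      rw [Walk.isPath_def] at htp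
      simp [List.concat_eq_append, List.nodup_append, htp, hwns]
      exact fun y hy hyw => hwns (hyw ▸ hy)
    have := hF.path_unique ⟨p, hp⟩ ⟨_, hq'⟩
    have heq : p = (p.takeUntil x hxs).concat hx.symm := congrArg Subtype.val this
    have heq2 := congrArg Walk.reverse heq
    rw [Walk.reverse_concat, hq] at heq2
    have := congrArg Walk.support heq2
    rw [Walk.support_cons, Walk.support_cons, Walk.support_eq_cons q,
      Walk.support_eq_cons ((p.takeUntil x hxs).reverse)] at this
    simp only [List.cons.injEq] at this
    exact hxu this.2.1.symm
  · -- extend p to a longer path, contradicting maximality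
    have hq' : (p.concat hx).IsPath := by
      rw [Walk.isPath_def, Walk.support_concat]
      rw [Walk.isPath_def] at hp
      simp [List.concat_eq_append, List.nodup_append, hp, hxs]
      exact fun y hy hyx => hxs (hyx ▸ hy)
    have hlt : (p.concat hx).length < Fintype.card V := hq'.length_lt
    have : n + 1 ≤ n := by
      apply Nat.le_findGreatest
      · rw [← hlen]; simpa [Walk.length_concat] using hlt.le
      · exact ⟨x, p.concat hx, hq', by simp [Walk.length_concat, hlen]⟩
    omega

/-- Every finite forest has an orientation in which every vertex has at most one
outgoing edge (stated as: any two outgoing edges at a vertex coincide). -/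
lemma forest_orient {V : Type*} [Fintype V] [DecidableEq V] :
    ∀ (F : SimpleGraph V), F.IsAcyclic →
    ∃ o : Sym2 V → V, (∀ e ∈ F.edgeSet, o e ∈ e) ∧
      ∀ v e₁ e₂, e₁ ∈ F.edgeSet → e₂ ∈ F.edgeSet → v ∈ e₁ → v ∈ e₂ →
        o e₁ ≠ v → o e₂ ≠ v → e₁ = e₂ := by
  classical
  suffices h : ∀ (n : ℕ) (F : SimpleGraph V), F.edgeSet.ncard = n → F.IsAcyclic →
      ∃ o : Sym2 V → V, (∀ e ∈ F.edgeSet, o e ∈ e) ∧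
        ∀ v e₁ e₂, e₁ ∈ F.edgeSet → e₂ ∈ F.edgeSet → v ∈ e₁ → v ∈ e₂ →
          o e₁ ≠ v → o e₂ ≠ v → e₁ = e₂ by
    exact fun F => h F.edgeSet.ncard F rfl
  intro n
  induction n using Nat.strong_induction_on with
  | _ n IH =>
    intro F hcard hF
    rcases Set.eq_empty_or_nonempty F.edgeSet with hemp | hne
    · refine ⟨fun e => (Quot.out e).1, ?_, ?_⟩
      · intro e he; rw [hemp] at he; exact absurd he (Set.notMem_empty e)
      · intro v e₁ e₂ h1 _ _ _ _ _; rw [hemp] at h1; exact absurd h1 (Set.notMem_empty e₁)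
    · -- get an adjacency
      obtain ⟨a, b, he⟩ : ∃ a b, F.Adj a b := by
        obtain ⟨e, he⟩ := hne
        induction e with
        | _ a b => exact ⟨a, b, (F.mem_edgeSet).mp he⟩
      obtain ⟨w, u, hwu, huniq⟩ := exists_leaf hF he
      set e₀ : Sym2 V := s(w, u) with he₀
      have he₀mem : e₀ ∈ F.edgeSet := hwu
      set F' := F.deleteEdges {e₀} with hF'def
      have hE' : F'.edgeSet = F.edgeSet \ {e₀} := F.edgeSet_deleteEdges {e₀}
      have hlt : F'.edgeSet.ncard < n := by
        rw [hE', ← hcard]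
        exact Set.ncard_diff_singleton_lt_of_mem he₀mem F.edgeSet.toFinite
      have hF'ac : F'.IsAcyclic := fun v c hc =>
        hF (c.mapLe (F.deleteEdges_le {e₀})) (hc.mapLe _)
      obtain ⟨o', ho'1, ho'2⟩ := IH _ hlt F' rfl hF'ac
      -- every edge of F at w is e₀
      have hwedge : ∀ e ∈ F.edgeSet, w ∈ e → e = e₀ := by
        intro e
        induction e with
        | _ x y =>
          intro hxy hw
          rw [SimpleGraph.mem_edgeSet] at hxy
          rcases Sym2.mem_iff.mp hw with rfl | rfl
          · rw [huniq y hxy]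
          · rw [huniq x hxy.symm, Sym2.eq_swap]
      refine ⟨fun e => if e = e₀ then u else o' e, ?_, ?_⟩
      · intro e heF
        by_cases h : e = e₀
        · simp only [h, if_pos rfl, he₀]
          exact Sym2.mem_mk_right w u
        · simp only [if_neg h]
          exact ho'1 e (by rw [hE']; exact ⟨heF, h⟩)
      · intro v e₁ e₂ h1 h2 hv1 hv2 ho1 ho2
        change (if e₁ = e₀ then u else o' e₁) ≠ v at ho1
        change (if e₂ = e₀ then u else o' e₂) ≠ v at ho2
        by_cases k1 : e₁ = e₀ <;> by_cases k2 : e₂ = e₀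
        · rw [k1, k2]
        · exfalso
          rw [if_pos k1] at ho1
          have hvw : v = w := by
            rw [k1, he₀] at hv1
            rcases Sym2.mem_iff.mp hv1 with h | h
            · exact h
            · exact absurd h.symm ho1
          exact k2 (hwedge e₂ h2 (hvw ▸ hv2))
        · exfalso
          rw [if_pos k2] at ho2
          have hvw : v = w := by
            rw [k2, he₀] at hv2
            rcases Sym2.mem_iff.mp hv2 with h | h
            · exact h
            · exact absurd h.symm ho2
          exact k1 (hwedge e₁ h1 (hvw ▸ hv1))
        · rw [if_neg k1] at ho1
          rw [if_neg k2] at ho2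
          exact ho'2 v e₁ e₂ (by rw [hE']; exact ⟨h1, k1⟩) (by rw [hE']; exact ⟨h2, k2⟩)
            hv1 hv2 ho1 ho2

/-- Let `G` be a finite simple graph whose edge set can be partitioned into `α`
sets, each of which forms a forest. Then there exists an orientation of the edges of `G` in which
every vertex has out-degree at most `α`. -/
theorem stmt2 {V : Type*} [Fintype V] [DecidableEq V] (G : SimpleGraph V) [DecidableRel G.Adj]
    (α : ℕ) (c : Sym2 V → Fin α) (hforest : ∀ i : Fin α, (labelGraph G c i).IsAcyclic) :
    ∃ o : Sym2 V → V, IsOrientation G o ∧ ∀ v : V, outDegree G o v ≤ α := by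
  classical
  choose o ho1 ho2 using fun i : Fin α => forest_orient (labelGraph G c i) (hforest i)
  have hmem : ∀ (e : Sym2 V) (i : Fin α), e ∈ G.edgeSet → c e = i →
      e ∈ (labelGraph G c i).edgeSet := by
    intro e
    induction e with
    | _ x y => exact fun i hG hc => And.intro hG hc
  refine ⟨fun e => o (c e) e, ?_, ?_⟩
  · intro e he
    exact ho1 (c e) e (hmem e (c e) he rfl)
  · intro v
    unfold outDegree
    rw [Finset.card_eq_sum_card_fiberwise (f := c) (t := Finset.univ)
      (fun e _ => Finset.mem_univ (c e))]
    have hbound : ∀ i : Fin α,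
        ((G.edgeFinset.filter (fun e => v ∈ e ∧ o (c e) e ≠ v)).filter
          (fun e => c e = i)).card ≤ 1 := by
      intro i
      apply Finset.card_le_one.mpr
      intro e₁ he₁ e₂ he₂
      simp only [Finset.mem_filter, SimpleGraph.mem_edgeFinset] at he₁ he₂
      obtain ⟨⟨hE₁, hv₁, ho₁⟩, hc₁⟩ := he₁
      obtain ⟨⟨hE₂, hv₂, ho₂⟩, hc₂⟩ := he₂
      rw [hc₁] at ho₁
      rw [hc₂] at ho₂
      exact ho2 i v e₁ e₂ (hmem e₁ i hE₁ hc₁) (hmem e₂ i hE₂ hc₂) hv₁ hv₂ ho₁ ho₂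
    calc ∑ i : Fin α, ((G.edgeFinset.filter (fun e => v ∈ e ∧ o (c e) e ≠ v)).filter
          (fun e => c e = i)).card
        ≤ ∑ _i : Fin α, 1 := Finset.sum_le_sum (fun i _ => hbound i)
      _ = α := by simp
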